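/- arXiv:2012.00077 — 2 statements merged into one kernel-verified Lean document; each statement's English description precedes it below -/
import Mathlib

section
/- (Achievability part of the main hypothesis-testing theorem.) For every γ ≥ 0 and every K ∈ ℕ, the region of error-exponent pairs achievable in a (γ,K)-almost-fixed-length manner contains R_γ ∩ K·R_FL, i.e., R_γ ∩ K·R_FL ⊆ R_AFL^(γ,K). -/
open Real Finset
open scoped Classical

noncomputable section

variable {X : Type} [Fintype X]

/-- `p` is a probability mass function on the finite alphabet `X`. -/
def IsPMF (p : X → ℝ) : Prop := (∀ x, 0 ≤ p x) ∧ ∑ x, p x = 1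

/-- Kullback–Leibler divergence (natural logarithms) between distributions on a finite
alphabet, with the convention `0 · log(0/·) = 0`. -/
def klDiv (p q : X → ℝ) : ℝ := ∑ x, p x * Real.log (p x / q x)

/-- The `λ`-tilted distribution between `P1` and `P2`. -/
def tilted (P1 P2 : X → ℝ) (lam : ℝ) (x : X) : ℝ :=
  P1 x ^ (1 - lam) * P2 x ^ lam / ∑ a, P1 a ^ (1 - lam) * P2 a ^ lam

/-- The fixed-length error-exponent region
`R_FL = {(E1,E2) : ∃ λ ∈ [0,1], E1 ≤ D(P^(λ)‖P1) ∧ E2 ≤ D(P^(λ)‖P2)}`. -/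
def RFL (P1 P2 : X → ℝ) : Set (ℝ × ℝ) :=
  { E | ∃ lam ∈ Set.Icc (0:ℝ) 1,
      E.1 ≤ klDiv (tilted P1 P2 lam) P1 ∧ E.2 ≤ klDiv (tilted P1 P2 lam) P2 }

/-- `E1(γ) = max { D(P^(λ)‖P1) : λ ∈ [0,1], D(P^(λ)‖P2) ≥ γ }`. -/
def E1exp (P1 P2 : X → ℝ) (γ : ℝ) : ℝ :=
  sSup { e | ∃ lam ∈ Set.Icc (0:ℝ) 1,
      γ ≤ klDiv (tilted P1 P2 lam) P2 ∧ e = klDiv (tilted P1 P2 lam) P1 }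

/-- `E2(γ) = max { D(P^(λ)‖P2) : λ ∈ [0,1], D(P^(λ)‖P1) ≥ γ }`. -/
def E2exp (P1 P2 : X → ℝ) (γ : ℝ) : ℝ :=
  sSup { e | ∃ lam ∈ Set.Icc (0:ℝ) 1,
      γ ≤ klDiv (tilted P1 P2 lam) P1 ∧ e = klDiv (tilted P1 P2 lam) P2 }

/-- `R_γ = R_FL ∪ ([0,E1(γ)] × [0,E2(γ)])`. -/
def Rgamma (P1 P2 : X → ℝ) (γ : ℝ) : Set (ℝ × ℝ) :=
  RFL P1 P2 ∪ (Set.Icc 0 (E1exp P1 P2 γ) ×ˢ Set.Icc 0 (E2exp P1 P2 γ))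

/-- `K·S = {K·x : x ∈ S}` for `S ⊆ ℝ²`. -/
def scaleSet (K : ℕ) (S : Set (ℝ × ℝ)) : Set (ℝ × ℝ) :=
  (fun p : ℝ × ℝ => ((K : ℝ) * p.1, (K : ℝ) * p.2)) '' S

/-- Probability of the i.i.d. sample sequence `x` under the distribution `P`. -/
def prodProb (P : X → ℝ) {N : ℕ} (x : Fin N → X) : ℝ := ∏ i, P (x i)

/-- The first `n` samples, as a list. -/
def histX {N : ℕ} (x : Fin N → X) (n : ℕ) : List X := (List.ofFn x).take n

/-- A sequential binary hypothesis test whose stopping time is almost surely bounded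
by `N`: a stopping time `τ` with respect to the filtration `σ(X_1,…,X_n)` together with
a decision (`accept1 = true` means "choose `H1`") taken at the stopping time; the
decision regions are `A1^τ = {accept1}` and `A2^τ = {¬ accept1}`. -/
structure SeqTest (X : Type) [Fintype X] (N : ℕ) where
  τ : (Fin N → X) → ℕ
  τ_le : ∀ x, τ x ≤ N
  τ_stopping : ∀ x x', histX x' (τ x) = histX x (τ x) → τ x' = τ x
  accept1 : List X → Bool

/-- Type-I error probability `P1(A2^τ)`. -/
def errProb1 (P1 : X → ℝ) {N : ℕ} (T : SeqTest X N) : ℝ :=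
  ∑ x : Fin N → X, prodProb P1 x *
    (if T.accept1 (histX x (T.τ x)) = false then 1 else 0)

/-- Type-II error probability `P2(A1^τ)`. -/
def errProb2 (P2 : X → ℝ) {N : ℕ} (T : SeqTest X N) : ℝ :=
  ∑ x : Fin N → X, prodProb P2 x *
    (if T.accept1 (histX x (T.τ x)) = true then 1 else 0)

/-- Probability `P(τ > n)` under sampling distribution `P`. -/
def lateProbHT (P : X → ℝ) {N : ℕ} (T : SeqTest X N) (n : ℕ) : ℝ :=
  ∑ x : Fin N → X, prodProb P x * (if n < T.τ x then 1 else 0)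

/-- `(E1,E2)` is achievable in a `(γ,K)`-almost-fixed-length manner: for every `δ > 0`
and all large `n` there is a test with `P_i(τ > n) ≤ e^{−γn}`, `τ ≤ Kn` a.s. (encoded in
the type of the test), `P1(A2^τ) ≤ e^{−(E1−δ)n}` and `P2(A1^τ) ≤ e^{−(E2−δ)n}`. -/
def AFLAchievable (P1 P2 : X → ℝ) (γ : ℝ) (K : ℕ) (E : ℝ × ℝ) : Prop :=
  ∀ δ > 0, ∃ N0 : ℕ, ∀ n : ℕ, n ≥ N0 → ∃ T : SeqTest X (K * n),
    lateProbHT P1 T n ≤ Real.exp (-(γ * n)) ∧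
    lateProbHT P2 T n ≤ Real.exp (-(γ * n)) ∧
    errProb1 P1 T ≤ Real.exp (-((E.1 - δ) * n)) ∧
    errProb2 P2 T ≤ Real.exp (-((E.2 - δ) * n))

/-- `R_AFL^(γ,K)`: the region of error-exponent pairs achievable in a
`(γ,K)`-almost-fixed-length manner. -/
def RAFL (P1 P2 : X → ℝ) (γ : ℝ) (K : ℕ) : Set (ℝ × ℝ) :=
  { E | AFLAchievable P1 P2 γ K E }

/- ===== Auxiliary machinery for the achievability proof ===== -/

section AFLAux

lemma AFL_sum_pmf_nonempty {P : X → ℝ} (h : ∑ x, P x = 1) : Nonempty X := by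
  by_contra hc
  rw [not_nonempty_iff] at hc
  rw [Finset.univ_eq_empty, Finset.sum_empty] at h
  norm_num at h

variable (P1 P2 : X → ℝ)

lemma Zfn_pos (hs1 : ∀ x, 0 < P1 x) (hs2 : ∀ x, 0 < P2 x) [Nonempty X] (lam : ℝ) :
    0 < ∑ a, P1 a ^ (1 - lam) * P2 a ^ lam :=
  Finset.sum_pos (fun a _ => mul_pos (Real.rpow_pos_of_pos (hs1 a) _)
    (Real.rpow_pos_of_pos (hs2 a) _)) Finset.univ_nonempty

lemma tilted_pos (hs1 : ∀ x, 0 < P1 x) (hs2 : ∀ x, 0 < P2 x) [Nonempty X] (lam : ℝ) (a : X) :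
    0 < tilted P1 P2 lam a :=
  div_pos (mul_pos (Real.rpow_pos_of_pos (hs1 a) _) (Real.rpow_pos_of_pos (hs2 a) _))
    (Zfn_pos P1 P2 hs1 hs2 lam)

lemma tilted_sum (hs1 : ∀ x, 0 < P1 x) (hs2 : ∀ x, 0 < P2 x) [Nonempty X] (lam : ℝ) :
    ∑ a, tilted P1 P2 lam a = 1 := by
  unfold tilted
  rw [← Finset.sum_div]
  exact div_self (Zfn_pos P1 P2 hs1 hs2 lam).ne'

lemma log_tilted (hs1 : ∀ x, 0 < P1 x) (hs2 : ∀ x, 0 < P2 x) [Nonempty X] (lam : ℝ) (a : X) :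
    Real.log (tilted P1 P2 lam a) =
      (1 - lam) * Real.log (P1 a) + lam * Real.log (P2 a)
        - Real.log (∑ b, P1 b ^ (1 - lam) * P2 b ^ lam) := by
  unfold tilted
  rw [Real.log_div (mul_pos (Real.rpow_pos_of_pos (hs1 a) _)
      (Real.rpow_pos_of_pos (hs2 a) _)).ne' (Zfn_pos P1 P2 hs1 hs2 lam).ne',
    Real.log_mul (Real.rpow_pos_of_pos (hs1 a) _).ne' (Real.rpow_pos_of_pos (hs2 a) _).ne',
    Real.log_rpow (hs1 a), Real.log_rpow (hs2 a)]

lemma klD1 (hs1 : ∀ x, 0 < P1 x) (hs2 : ∀ x, 0 < P2 x) [Nonempty X] (lam : ℝ) :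
    klDiv (tilted P1 P2 lam) P1 =
      lam * (∑ a, tilted P1 P2 lam a * Real.log (P2 a / P1 a))
        - Real.log (∑ b, P1 b ^ (1 - lam) * P2 b ^ lam) := by
  unfold klDiv
  have : ∀ a : X, tilted P1 P2 lam a * Real.log (tilted P1 P2 lam a / P1 a)
      = lam * (tilted P1 P2 lam a * Real.log (P2 a / P1 a))
        - tilted P1 P2 lam a * Real.log (∑ b, P1 b ^ (1 - lam) * P2 b ^ lam) := by
    intro a
    rw [Real.log_div (tilted_pos P1 P2 hs1 hs2 lam a).ne' (hs1 a).ne',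
      log_tilted P1 P2 hs1 hs2, Real.log_div (hs2 a).ne' (hs1 a).ne']
    ring
  rw [Finset.sum_congr rfl (fun a _ => this a), Finset.sum_sub_distrib,
    ← Finset.mul_sum, ← Finset.sum_mul, tilted_sum P1 P2 hs1 hs2, one_mul]

lemma klD2 (hs1 : ∀ x, 0 < P1 x) (hs2 : ∀ x, 0 < P2 x) [Nonempty X] (lam : ℝ) :
    klDiv (tilted P1 P2 lam) P2 =
      -((1 - lam) * (∑ a, tilted P1 P2 lam a * Real.log (P2 a / P1 a)))
        - Real.log (∑ b, P1 b ^ (1 - lam) * P2 b ^ lam) := by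
  unfold klDiv
  have : ∀ a : X, tilted P1 P2 lam a * Real.log (tilted P1 P2 lam a / P2 a)
      = -((1 - lam) * (tilted P1 P2 lam a * Real.log (P2 a / P1 a)))
        - tilted P1 P2 lam a * Real.log (∑ b, P1 b ^ (1 - lam) * P2 b ^ lam) := by
    intro a
    rw [Real.log_div (tilted_pos P1 P2 hs1 hs2 lam a).ne' (hs2 a).ne',
      log_tilted P1 P2 hs1 hs2, Real.log_div (hs2 a).ne' (hs1 a).ne']
    ring
  rw [Finset.sum_congr rfl (fun a _ => this a), Finset.sum_sub_distrib,
    ← Finset.sum_mul, tilted_sum P1 P2 hs1 hs2, one_mul,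
    Finset.sum_neg_distrib, ← Finset.mul_sum]

lemma klDiv_nonneg' (q p : X → ℝ) (hq : ∀ x, 0 < q x) (hp : ∀ x, 0 < p x)
    (hqs : ∑ x, q x = 1) (hps : ∑ x, p x = 1) : 0 ≤ klDiv q p := by
  have h : ∀ a : X, q a - p a ≤ q a * Real.log (q a / p a) := by
    intro a
    have h1 : Real.log (p a / q a) ≤ p a / q a - 1 :=
      Real.log_le_sub_one_of_pos (div_pos (hp a) (hq a))
    have h2 : Real.log (q a / p a) = -Real.log (p a / q a) := by
      rw [← Real.log_inv]
      congr 1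
      rw [inv_div]
    have h3 : q a * Real.log (p a / q a) ≤ q a * (p a / q a - 1) :=
      mul_le_mul_of_nonneg_left h1 (hq a).le
    have h4 : q a * (p a / q a - 1) = p a - q a := by
      rw [mul_sub, mul_div_cancel₀ _ (hq a).ne', mul_one]
    rw [h2]; nlinarith
  calc (0:ℝ) = ∑ a, (q a - p a) := by rw [Finset.sum_sub_distrib, hqs, hps]; ring
  _ ≤ _ := Finset.sum_le_sum (fun a _ => h a)

lemma klDiv_le_sum_neg_log (q p : X → ℝ) (hq : ∀ x, 0 < q x) (hp : ∀ x, 0 < p x)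
    (hqs : ∑ x, q x = 1) (hps : ∑ x, p x = 1) :
    klDiv q p ≤ ∑ a, -Real.log (p a) := by
  apply Finset.sum_le_sum; intro a _
  have hq1 : q a ≤ 1 := hqs ▸ Finset.single_le_sum (fun x _ => (hq x).le) (Finset.mem_univ a)
  have hp1 : p a ≤ 1 := hps ▸ Finset.single_le_sum (fun x _ => (hp x).le) (Finset.mem_univ a)
  have hlp : 0 ≤ -Real.log (p a) := by rw [neg_nonneg]; exact Real.log_nonpos (hp a).le hp1
  have hlog : Real.log (q a / p a) ≤ -Real.log (p a) := by
    rw [Real.log_div (hq a).ne' (hp a).ne']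
    have := Real.log_nonpos (hq a).le hq1
    linarith
  rcases le_or_gt (Real.log (q a / p a)) 0 with h | h
  · exact le_trans (mul_nonpos_of_nonneg_of_nonpos (hq a).le h) hlp
  · calc q a * Real.log (q a / p a) ≤ 1 * Real.log (q a / p a) :=
        mul_le_mul_of_nonneg_right hq1 h.le
    _ ≤ -Real.log (p a) := by rw [one_mul]; exact hlog

lemma chernoff1 (hs1 : ∀ x, 0 < P1 x) (hs2 : ∀ x, 0 < P2 x) [Nonempty X]
    {lam : ℝ} (h0 : 0 ≤ lam) (m : ℕ) (t : ℝ) :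
    ∑ y : Fin m → X, prodProb P1 y *
        (if (∑ i, Real.log (P1 (y i) / P2 (y i))) ≤ t * m then (1:ℝ) else 0)
      ≤ Real.exp (m * (lam * t + Real.log (∑ a, P1 a ^ (1 - lam) * P2 a ^ lam))) := by
  have hZ : (0:ℝ) < ∑ a, P1 a ^ (1 - lam) * P2 a ^ lam :=
    Finset.sum_pos (fun a _ => mul_pos (Real.rpow_pos_of_pos (hs1 a) _)
      (Real.rpow_pos_of_pos (hs2 a) _)) Finset.univ_nonempty
  have key : ∀ y : Fin m → X,
      prodProb P1 y * (if (∑ i, Real.log (P1 (y i) / P2 (y i))) ≤ t * m then (1:ℝ) else 0)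
        ≤ prodProb P1 y *
          Real.exp (lam * (t * m - ∑ i, Real.log (P1 (y i) / P2 (y i)))) := by
    intro y
    have hp : 0 ≤ prodProb P1 y := Finset.prod_nonneg (fun i _ => (hs1 _).le)
    apply mul_le_mul_of_nonneg_left _ hp
    split_ifs with h
    · exact Real.one_le_exp (by nlinarith)
    · exact (Real.exp_pos _).le
  have hinner : ∀ a : X, P1 a * Real.exp (-(lam * Real.log (P1 a / P2 a)))
      = P1 a ^ (1 - lam) * P2 a ^ lam := by
    intro a
    have hd : (0:ℝ) < P1 a / P2 a := div_pos (hs1 a) (hs2 a)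
    rw [show -(lam * Real.log (P1 a / P2 a)) = Real.log (P1 a / P2 a) * (-lam) by ring,
      ← Real.rpow_def_of_pos hd, Real.div_rpow (hs1 a).le (hs2 a).le,
      Real.rpow_neg (hs2 a).le, div_eq_mul_inv, inv_inv,
      show (1:ℝ) - lam = 1 + (-lam) by ring, Real.rpow_add (hs1 a), Real.rpow_one]
    ring
  calc ∑ y : Fin m → X, prodProb P1 y *
        (if (∑ i, Real.log (P1 (y i) / P2 (y i))) ≤ t * m then (1:ℝ) else 0)
      ≤ ∑ y : Fin m → X, prodProb P1 y *
          Real.exp (lam * (t * m - ∑ i, Real.log (P1 (y i) / P2 (y i)))) :=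
        Finset.sum_le_sum (fun y _ => key y)
    _ = Real.exp (lam * (t * m)) * ∑ y : Fin m → X,
          ∏ i, (P1 (y i) * Real.exp (-(lam * Real.log (P1 (y i) / P2 (y i))))) := by
        rw [Finset.mul_sum]
        apply Finset.sum_congr rfl
        intro y _
        have he : lam * (t * ↑m - ∑ i, Real.log (P1 (y i) / P2 (y i)))
            = lam * (t * ↑m) + ∑ i, -(lam * Real.log (P1 (y i) / P2 (y i))) := by
          rw [Finset.sum_neg_distrib, ← Finset.mul_sum]; ring
        rw [he, Real.exp_add, Real.exp_sum, Finset.prod_mul_distrib]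
        unfold prodProb
        ring
    _ = Real.exp (lam * (t * m)) * (∑ a, P1 a ^ (1 - lam) * P2 a ^ lam) ^ m := by
        congr 1
        have h1 : (∑ a, P1 a ^ (1 - lam) * P2 a ^ lam) ^ m
            = ∏ _i : Fin m, ∑ a, P1 a ^ (1 - lam) * P2 a ^ lam := by
          rw [Finset.prod_const, Finset.card_univ, Fintype.card_fin]
        rw [Finset.sum_congr rfl (fun y _ => Finset.prod_congr rfl (fun i _ => hinner (y i))),
          h1, Finset.prod_univ_sum]
        rw [Fintype.piFinset_univ]
    _ = Real.exp (m * (lam * t + Real.log (∑ a, P1 a ^ (1 - lam) * P2 a ^ lam))) := by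
        set L := Real.log (∑ a, P1 a ^ (1 - lam) * P2 a ^ lam) with hLdef
        rw [show (∑ a, P1 a ^ (1 - lam) * P2 a ^ lam) = Real.exp L from (Real.exp_log hZ).symm,
          ← Real.exp_nat_mul, ← Real.exp_add]
        congr 1
        ring

lemma chernoff2 (hs1 : ∀ x, 0 < P1 x) (hs2 : ∀ x, 0 < P2 x) [Nonempty X]
    {lam : ℝ} (h1 : lam ≤ 1) (m : ℕ) (t : ℝ) :
    ∑ y : Fin m → X, prodProb P2 y *
        (if t * m ≤ (∑ i, Real.log (P1 (y i) / P2 (y i))) then (1:ℝ) else 0)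
      ≤ Real.exp (m * (-((1 - lam) * t) + Real.log (∑ a, P1 a ^ (1 - lam) * P2 a ^ lam))) := by
  have hZ : (0:ℝ) < ∑ a, P1 a ^ (1 - lam) * P2 a ^ lam :=
    Finset.sum_pos (fun a _ => mul_pos (Real.rpow_pos_of_pos (hs1 a) _)
      (Real.rpow_pos_of_pos (hs2 a) _)) Finset.univ_nonempty
  have key : ∀ y : Fin m → X,
      prodProb P2 y * (if t * m ≤ (∑ i, Real.log (P1 (y i) / P2 (y i))) then (1:ℝ) else 0)
        ≤ prodProb P2 y *
          Real.exp ((1 - lam) * ((∑ i, Real.log (P1 (y i) / P2 (y i))) - t * m)) := by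
    intro y
    have hp : 0 ≤ prodProb P2 y := Finset.prod_nonneg (fun i _ => (hs2 _).le)
    apply mul_le_mul_of_nonneg_left _ hp
    split_ifs with h
    · exact Real.one_le_exp (by nlinarith)
    · exact (Real.exp_pos _).le
  have hinner : ∀ a : X, P2 a * Real.exp ((1 - lam) * Real.log (P1 a / P2 a))
      = P1 a ^ (1 - lam) * P2 a ^ lam := by
    intro a
    have hd : (0:ℝ) < P1 a / P2 a := div_pos (hs1 a) (hs2 a)
    rw [show (1 - lam) * Real.log (P1 a / P2 a) = Real.log (P1 a / P2 a) * (1 - lam) by ring,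
      ← Real.rpow_def_of_pos hd, Real.div_rpow (hs1 a).le (hs2 a).le]
    rw [show lam = 1 + (-(1 - lam)) by ring, Real.rpow_add (hs2 a), Real.rpow_one,
      Real.rpow_neg (hs2 a).le]
    field_simp
    ring
  calc ∑ y : Fin m → X, prodProb P2 y *
        (if t * m ≤ (∑ i, Real.log (P1 (y i) / P2 (y i))) then (1:ℝ) else 0)
      ≤ ∑ y : Fin m → X, prodProb P2 y *
          Real.exp ((1 - lam) * ((∑ i, Real.log (P1 (y i) / P2 (y i))) - t * m)) :=
        Finset.sum_le_sum (fun y _ => key y)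
    _ = Real.exp (-((1 - lam) * (t * m))) * ∑ y : Fin m → X,
          ∏ i, (P2 (y i) * Real.exp ((1 - lam) * Real.log (P1 (y i) / P2 (y i)))) := by
        rw [Finset.mul_sum]
        apply Finset.sum_congr rfl
        intro y _
        have he : (1 - lam) * ((∑ i, Real.log (P1 (y i) / P2 (y i))) - t * ↑m)
            = -((1 - lam) * (t * ↑m)) + ∑ i, (1 - lam) * Real.log (P1 (y i) / P2 (y i)) := by
          rw [← Finset.mul_sum]; ring
        rw [he, Real.exp_add, Real.exp_sum, Finset.prod_mul_distrib]
        unfold prodProb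
        ring
    _ = Real.exp (-((1 - lam) * (t * m))) * (∑ a, P1 a ^ (1 - lam) * P2 a ^ lam) ^ m := by
        congr 1
        have h1' : (∑ a, P1 a ^ (1 - lam) * P2 a ^ lam) ^ m
            = ∏ _i : Fin m, ∑ a, P1 a ^ (1 - lam) * P2 a ^ lam := by
          rw [Finset.prod_const, Finset.card_univ, Fintype.card_fin]
        rw [Finset.sum_congr rfl (fun y _ => Finset.prod_congr rfl (fun i _ => hinner (y i))),
          h1', Finset.prod_univ_sum]
        rw [Fintype.piFinset_univ]
    _ = Real.exp (m * (-((1 - lam) * t) + Real.log (∑ a, P1 a ^ (1 - lam) * P2 a ^ lam))) := by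
        set L := Real.log (∑ a, P1 a ^ (1 - lam) * P2 a ^ lam) with hLdef
        rw [show (∑ a, P1 a ^ (1 - lam) * P2 a ^ lam) = Real.exp L from (Real.exp_log hZ).symm,
          ← Real.exp_nat_mul, ← Real.exp_add]
        congr 1
        ring

end AFLAux

section AFLMargin

lemma histX_full {N : ℕ} (x : Fin N → X) : histX x N = List.ofFn x := by
  unfold histX
  exact List.take_of_length_le (by simp)

lemma histX_snoc {M n : ℕ} (hn : n ≤ M) (y : Fin M → X) (a : X) :
    histX (Fin.snoc y a) n = histX y n := by
  unfold histX
  rw [List.ofFn_succ' (Fin.snoc y a), List.concat_eq_append]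
  simp only [Fin.snoc_castSucc]
  rw [List.take_append_of_le_length (by simpa using hn)]

lemma prodProb_snoc (P : X → ℝ) {M : ℕ} (y : Fin M → X) (a : X) :
    prodProb P (Fin.snoc y a) = prodProb P y * P a := by
  unfold prodProb
  rw [Fin.prod_univ_castSucc]
  simp

lemma margin_step (P : X → ℝ) (hP : ∑ a, P a = 1) (M n : ℕ) (hn : n ≤ M) (g : List X → ℝ) :
    ∑ x : Fin (M+1) → X, prodProb P x * g (histX x n)
      = ∑ y : Fin M → X, prodProb P y * g (histX y n) := by
  rw [← Equiv.sum_comp (Fin.snocEquiv (fun _ => X))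
    (fun x : Fin (M+1) → X => prodProb P x * g (histX x n)), Fintype.sum_prod_type]
  have : ∀ a : X, ∀ y : Fin M → X,
      prodProb P (Fin.snocEquiv (fun _ => X) (a, y))
          * g (histX (Fin.snocEquiv (fun _ => X) (a, y)) n)
        = P a * (prodProb P y * g (histX y n)) := by
    intro a y
    have he : (Fin.snocEquiv (fun _ => X)) (a, y) = Fin.snoc y a := rfl
    rw [he, prodProb_snoc, histX_snoc hn]
    ring
  rw [Finset.sum_congr rfl (fun a _ => Finset.sum_congr rfl (fun y _ => this a y))]
  rw [← Finset.sum_mul_sum]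
  rw [hP, one_mul]

lemma margin (P : X → ℝ) (hP : ∑ a, P a = 1) (g : List X → ℝ) :
    ∀ N n : ℕ, n ≤ N → (∑ x : Fin N → X, prodProb P x * g (histX x n))
      = ∑ y : Fin n → X, prodProb P y * g (List.ofFn y) := by
  intro N
  induction N with
  | zero =>
    intro n hn
    have : n = 0 := Nat.le_zero.mp hn
    subst this
    apply Finset.sum_congr rfl
    intro x _
    rw [histX_full]
  | succ M ih =>
    intro n hn
    rcases Nat.lt_or_ge M n with h | h
    · have : n = M + 1 := le_antisymm hn h
      subst this
      apply Finset.sum_congr rfl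
      intro x _
      rw [histX_full]
    · rw [margin_step P hP M n h g, ih n h]

end AFLMargin

section AFLConstruction
variable (P1 P2 : X → ℝ)

def Slst (l : List X) : ℝ := (l.map (fun s => Real.log (P1 s / P2 s))).sum

lemma Slst_ofFn {m : ℕ} (y : Fin m → X) :
    Slst P1 P2 (List.ofFn y) = ∑ i, Real.log (P1 (y i) / P2 (y i)) := by
  simp [Slst, List.map_ofFn, List.sum_ofFn, Function.comp]

/-- The per-sample tilted threshold. -/
def thrHT (lam : ℝ) : ℝ := -∑ a, tilted P1 P2 lam a * Real.log (P2 a / P1 a)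

lemma chernoffD1 (hs1 : ∀ x, 0 < P1 x) (hs2 : ∀ x, 0 < P2 x) [Nonempty X]
    {lam : ℝ} (hl : lam ∈ Set.Icc (0:ℝ) 1) (m : ℕ) :
    ∑ y : Fin m → X, prodProb P1 y *
        (if Slst P1 P2 (List.ofFn y) ≤ thrHT P1 P2 lam * m then (1:ℝ) else 0)
      ≤ Real.exp (-(m * klDiv (tilted P1 P2 lam) P1)) := by
  have heq : ∀ y : Fin m → X,
      prodProb P1 y * (if Slst P1 P2 (List.ofFn y) ≤ thrHT P1 P2 lam * m then (1:ℝ) else 0)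
        = prodProb P1 y * (if (∑ i, Real.log (P1 (y i) / P2 (y i)))
            ≤ thrHT P1 P2 lam * m then (1:ℝ) else 0) := by
    intro y
    rw [Slst_ofFn]
  rw [Finset.sum_congr rfl (fun y _ => heq y)]
  refine le_trans (chernoff1 P1 P2 hs1 hs2 hl.1 m (thrHT P1 P2 lam)) (le_of_eq ?_)
  congr 1
  rw [klD1 P1 P2 hs1 hs2 lam]
  unfold thrHT
  ring

lemma chernoffD2 (hs1 : ∀ x, 0 < P1 x) (hs2 : ∀ x, 0 < P2 x) [Nonempty X]
    {lam : ℝ} (hl : lam ∈ Set.Icc (0:ℝ) 1) (m : ℕ) :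
    ∑ y : Fin m → X, prodProb P2 y *
        (if thrHT P1 P2 lam * m ≤ Slst P1 P2 (List.ofFn y) then (1:ℝ) else 0)
      ≤ Real.exp (-(m * klDiv (tilted P1 P2 lam) P2)) := by
  have heq : ∀ y : Fin m → X,
      prodProb P2 y * (if thrHT P1 P2 lam * m ≤ Slst P1 P2 (List.ofFn y) then (1:ℝ) else 0)
        = prodProb P2 y * (if thrHT P1 P2 lam * m
            ≤ (∑ i, Real.log (P1 (y i) / P2 (y i))) then (1:ℝ) else 0) := by
    intro y
    rw [Slst_ofFn]
  rw [Finset.sum_congr rfl (fun y _ => heq y)]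
  refine le_trans (chernoff2 P1 P2 hs1 hs2 hl.2 m (thrHT P1 P2 lam)) (le_of_eq ?_)
  congr 1
  rw [klD2 P1 P2 hs1 hs2 lam]
  unfold thrHT
  ring

def twoStage (n K : ℕ) (hK : 1 ≤ K) (a b c : ℝ) : SeqTest X (K * n) where
  τ x := if a * n ≤ Slst P1 P2 (histX x n) ∨ Slst P1 P2 (histX x n) ≤ b * n then n else K * n
  τ_le x := by
    split_ifs
    · exact Nat.le_mul_of_pos_left n (by omega)
    · exact le_refl _
  τ_stopping x x' h := by
    by_cases hd : a * n ≤ Slst P1 P2 (histX x n) ∨ Slst P1 P2 (histX x n) ≤ b * n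
    · simp only [hd, if_true] at h ⊢
      rw [h]
      simp [hd]
    · simp only [hd, if_false] at h ⊢
      rw [histX_full, histX_full] at h
      have : x' = x := List.ofFn_injective h
      rw [this, if_neg hd]
  accept1 l := if l.length < K * n then (if a * n ≤ Slst P1 P2 l then true else false)
               else (if c * ((K * n : ℕ) : ℝ) ≤ Slst P1 P2 l then true else false)

variable {n K : ℕ} (hK : 1 ≤ K) (a b c : ℝ)

lemma hist_n_len (x : Fin (K * n) → X) (hK : 1 ≤ K) : (histX x n).length = n := by
  unfold histX
  simp only [List.length_take, List.length_ofFn]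
  exact min_eq_left (Nat.le_mul_of_pos_left n (by omega))

lemma twoStage_late_le (P : X → ℝ) (hP0 : ∀ x, 0 ≤ P x) (hP : ∑ a, P a = 1) :
    lateProbHT P (twoStage P1 P2 n K hK a b c) n
      ≤ ∑ y : Fin n → X, prodProb P y *
          (if b * n < Slst P1 P2 (List.ofFn y) ∧ Slst P1 P2 (List.ofFn y) < a * n
           then (1:ℝ) else 0) := by
  have hnN : n ≤ K * n := Nat.le_mul_of_pos_left n (by omega)
  have step : lateProbHT P (twoStage P1 P2 n K hK a b c) n
      ≤ ∑ x : Fin (K * n) → X, prodProb P x *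
          (if b * n < Slst P1 P2 (histX x n) ∧ Slst P1 P2 (histX x n) < a * n
           then (1:ℝ) else 0) := by
    apply Finset.sum_le_sum
    intro x _
    apply mul_le_mul_of_nonneg_left _ (Finset.prod_nonneg (fun i _ => hP0 _))
    by_cases hd : a * n ≤ Slst P1 P2 (histX x n) ∨ Slst P1 P2 (histX x n) ≤ b * n
    · have : (twoStage P1 P2 n K hK a b c).τ x = n := by simp [twoStage, hd]
      rw [this]
      simp only [lt_irrefl, if_false]
      positivity
    · push_neg at hd
      have h2 : (if b * ↑n < Slst P1 P2 (histX x n) ∧ Slst P1 P2 (histX x n) < a * ↑n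
          then (1:ℝ) else 0) = 1 := if_pos ⟨hd.2, hd.1⟩
      rw [h2]
      split_ifs <;> norm_num
  refine le_trans step (le_of_eq ?_)
  exact margin P hP
    (fun l => if b * n < Slst P1 P2 l ∧ Slst P1 P2 l < a * n then (1:ℝ) else 0) (K * n) n hnN

lemma twoStage_err1_le (hP0 : ∀ x, 0 ≤ P1 x) (hP : ∑ a, P1 a = 1) :
    errProb1 P1 (twoStage P1 P2 n K hK a b c)
      ≤ (∑ y : Fin n → X, prodProb P1 y *
            (if Slst P1 P2 (List.ofFn y) ≤ b * n then (1:ℝ) else 0))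
        + ∑ x : Fin (K * n) → X, prodProb P1 x *
            (if Slst P1 P2 (List.ofFn x) ≤ c * ((K * n : ℕ) : ℝ) then (1:ℝ) else 0) := by
  have hnN : n ≤ K * n := Nat.le_mul_of_pos_left n (by omega)
  have step : errProb1 P1 (twoStage P1 P2 n K hK a b c)
      ≤ (∑ x : Fin (K * n) → X, prodProb P1 x *
            (if Slst P1 P2 (histX x n) ≤ b * n then (1:ℝ) else 0))
        + ∑ x : Fin (K * n) → X, prodProb P1 x *
            (if Slst P1 P2 (List.ofFn x) ≤ c * ((K * n : ℕ) : ℝ) then (1:ℝ) else 0) := by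
    rw [← Finset.sum_add_distrib]
    apply Finset.sum_le_sum
    intro x _
    rw [← mul_add]
    apply mul_le_mul_of_nonneg_left _ (Finset.prod_nonneg (fun i _ => hP0 _))
    set T := twoStage P1 P2 n K hK a b c with hT
    by_cases herr : T.accept1 (histX x (T.τ x)) = false
    · rw [if_pos herr]
      by_cases hd : a * n ≤ Slst P1 P2 (histX x n) ∨ Slst P1 P2 (histX x n) ≤ b * n
      · have hτ : T.τ x = n := by simp [hT, twoStage, hd]
        rw [hτ] at herr
        by_cases hlt : n < K * n
        · have hacc : T.accept1 (histX x n)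
              = (if a * n ≤ Slst P1 P2 (histX x n) then true else false) := by
            simp only [hT, twoStage]
            rw [if_pos (by rw [hist_n_len x hK]; exact hlt)]
          rw [hacc] at herr
          have hS : ¬ (a * n ≤ Slst P1 P2 (histX x n)) := by
            intro hcon; rw [if_pos hcon] at herr; simp at herr
          have hSb : Slst P1 P2 (histX x n) ≤ b * n := by
            rcases hd with h | h
            · exact absurd h hS
            · exact h
          rw [if_pos hSb]
          split_ifs <;> norm_num
        · have hKn : K * n = n := le_antisymm (Nat.not_lt.mp hlt) hnN
          have hfull : histX x n = List.ofFn x := by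
            unfold histX
            exact List.take_of_length_le (by simp only [List.length_ofFn]; omega)
          have hacc : T.accept1 (histX x n)
              = (if c * ((K * n : ℕ) : ℝ) ≤ Slst P1 P2 (histX x n) then true else false) := by
            simp only [hT, twoStage]
            rw [if_neg (by rw [hist_n_len x hK]; exact hlt)]
          rw [hacc] at herr
          have hS : ¬ (c * ((K * n : ℕ) : ℝ) ≤ Slst P1 P2 (histX x n)) := by
            intro hcon; rw [if_pos hcon] at herr; simp at herr
          rw [hfull] at hS
          rw [if_pos (le_of_not_ge hS)]
          split_ifs <;> norm_num
      · have hτ : T.τ x = K * n := by simp [hT, twoStage, hd]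
        rw [hτ, histX_full] at herr
        have hacc : T.accept1 (List.ofFn x)
            = (if c * ((K * n : ℕ) : ℝ) ≤ Slst P1 P2 (List.ofFn x) then true else false) := by
          simp only [hT, twoStage]
          rw [if_neg (by simp)]
        rw [hacc] at herr
        have hS : ¬ (c * ((K * n : ℕ) : ℝ) ≤ Slst P1 P2 (List.ofFn x)) := by
          intro hcon; rw [if_pos hcon] at herr; simp at herr
        rw [if_pos (le_of_not_ge hS)]
        split_ifs <;> norm_num
    · rw [if_neg herr]
      split_ifs <;> norm_num
  refine le_trans step (le_of_eq ?_)
  congr 1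
  exact margin P1 hP (fun l => if Slst P1 P2 l ≤ b * n then (1:ℝ) else 0) (K * n) n hnN

lemma twoStage_err2_le (hP0 : ∀ x, 0 ≤ P2 x) (hP : ∑ a, P2 a = 1) :
    errProb2 P2 (twoStage P1 P2 n K hK a b c)
      ≤ (∑ y : Fin n → X, prodProb P2 y *
            (if a * n ≤ Slst P1 P2 (List.ofFn y) then (1:ℝ) else 0))
        + ∑ x : Fin (K * n) → X, prodProb P2 x *
            (if c * ((K * n : ℕ) : ℝ) ≤ Slst P1 P2 (List.ofFn x) then (1:ℝ) else 0) := by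
  have hnN : n ≤ K * n := Nat.le_mul_of_pos_left n (by omega)
  have step : errProb2 P2 (twoStage P1 P2 n K hK a b c)
      ≤ (∑ x : Fin (K * n) → X, prodProb P2 x *
            (if a * n ≤ Slst P1 P2 (histX x n) then (1:ℝ) else 0))
        + ∑ x : Fin (K * n) → X, prodProb P2 x *
            (if c * ((K * n : ℕ) : ℝ) ≤ Slst P1 P2 (List.ofFn x) then (1:ℝ) else 0) := by
    rw [← Finset.sum_add_distrib]
    apply Finset.sum_le_sum
    intro x _
    rw [← mul_add]
    apply mul_le_mul_of_nonneg_left _ (Finset.prod_nonneg (fun i _ => hP0 _))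
    set T := twoStage P1 P2 n K hK a b c with hT
    by_cases herr : T.accept1 (histX x (T.τ x)) = true
    · rw [if_pos herr]
      by_cases hd : a * n ≤ Slst P1 P2 (histX x n) ∨ Slst P1 P2 (histX x n) ≤ b * n
      · have hτ : T.τ x = n := by simp [hT, twoStage, hd]
        rw [hτ] at herr
        by_cases hlt : n < K * n
        · have hacc : T.accept1 (histX x n)
              = (if a * n ≤ Slst P1 P2 (histX x n) then true else false) := by
            simp only [hT, twoStage]
            rw [if_pos (by rw [hist_n_len x hK]; exact hlt)]
          rw [hacc] at herr
          have hS : a * n ≤ Slst P1 P2 (histX x n) := by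
            by_contra hcon
            rw [if_neg hcon] at herr
            simp at herr
          rw [if_pos hS]
          split_ifs <;> norm_num
        · have hKn : K * n = n := le_antisymm (Nat.not_lt.mp hlt) hnN
          have hfull : histX x n = List.ofFn x := by
            unfold histX
            exact List.take_of_length_le (by simp only [List.length_ofFn]; omega)
          have hacc : T.accept1 (histX x n)
              = (if c * ((K * n : ℕ) : ℝ) ≤ Slst P1 P2 (histX x n) then true else false) := by
            simp only [hT, twoStage]
            rw [if_neg (by rw [hist_n_len x hK]; exact hlt)]
          rw [hacc] at herr
          have hS : c * ((K * n : ℕ) : ℝ) ≤ Slst P1 P2 (histX x n) := by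
            by_contra hcon
            rw [if_neg hcon] at herr
            simp at herr
          rw [hfull] at hS
          rw [if_pos hS]
          split_ifs <;> norm_num
      · have hτ : T.τ x = K * n := by simp [hT, twoStage, hd]
        rw [hτ, histX_full] at herr
        have hacc : T.accept1 (List.ofFn x)
            = (if c * ((K * n : ℕ) : ℝ) ≤ Slst P1 P2 (List.ofFn x) then true else false) := by
          simp only [hT, twoStage]
          rw [if_neg (by simp)]
        rw [hacc] at herr
        have hS : c * ((K * n : ℕ) : ℝ) ≤ Slst P1 P2 (List.ofFn x) := by
          by_contra hcon
          rw [if_neg hcon] at herr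
          simp at herr
        rw [if_pos hS]
        split_ifs <;> norm_num
    · rw [if_neg herr]
      split_ifs <;> norm_num
  refine le_trans step (le_of_eq ?_)
  congr 1
  exact margin P2 hP (fun l => if a * n ≤ Slst P1 P2 l then (1:ℝ) else 0) (K * n) n hnN

/-- An indicator monotonicity helper. -/
lemma ind_mono {p q : Prop} [Decidable p] [Decidable q] (h : p → q) :
    (if p then (1:ℝ) else 0) ≤ (if q then (1:ℝ) else 0) := by
  by_cases h1 : p
  · rw [if_pos h1, if_pos (h h1)]
  · rw [if_neg h1]
    split_ifs <;> norm_num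

end AFLConstruction

set_option maxHeartbeats 1600000

/-- **Achievability.** For every `γ ≥ 0` and every `K ∈ ℕ`,
`R_γ ∩ K·R_FL ⊆ R_AFL^(γ,K)`. -/
theorem afl_ht_achievability
    {X : Type} [Fintype X]
    (P1 P2 : X → ℝ) (h1 : IsPMF P1) (h2 : IsPMF P2) (hne : P1 ≠ P2)
    (hs1 : ∀ x, 0 < P1 x) (hs2 : ∀ x, 0 < P2 x)
    (γ : ℝ) (hγ : 0 ≤ γ) (K : ℕ) (hK : 1 ≤ K) :
    Rgamma P1 P2 γ ∩ scaleSet K (RFL P1 P2) ⊆ RAFL P1 P2 γ K := by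
  haveI hX : Nonempty X := AFL_sum_pmf_nonempty h1.2
  intro E hE
  obtain ⟨hERg, hEsc⟩ := hE
  obtain ⟨e, heR, heq⟩ := hEsc
  obtain ⟨lamS, hlamS, hse1, hse2⟩ := heR
  have hE1eq : E.1 = K * e.1 := by rw [← heq]
  have hE2eq : E.2 = K * e.2 := by rw [← heq]
  have hE1S : E.1 ≤ K * klDiv (tilted P1 P2 lamS) P1 := by
    rw [hE1eq]
    exact mul_le_mul_of_nonneg_left hse1 (Nat.cast_nonneg K)
  have hE2S : E.2 ≤ K * klDiv (tilted P1 P2 lamS) P2 := by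
    rw [hE2eq]
    exact mul_le_mul_of_nonneg_left hse2 (Nat.cast_nonneg K)
  intro δ hδ
  have hDnn1 : ∀ lam : ℝ, 0 ≤ klDiv (tilted P1 P2 lam) P1 := fun lam =>
    klDiv_nonneg' _ _ (tilted_pos P1 P2 hs1 hs2 lam) hs1 (tilted_sum P1 P2 hs1 hs2 lam) h1.2
  have hDnn2 : ∀ lam : ℝ, 0 ≤ klDiv (tilted P1 P2 lam) P2 := fun lam =>
    klDiv_nonneg' _ _ (tilted_pos P1 P2 hs1 hs2 lam) hs2 (tilted_sum P1 P2 hs1 hs2 lam) h2.2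
  obtain ⟨lamA, lamB, hlamA, hlamB, hDB1, hDA2, hdisj⟩ :
      ∃ lamA lamB : ℝ, lamA ∈ Set.Icc (0:ℝ) 1 ∧ lamB ∈ Set.Icc (0:ℝ) 1 ∧
        E.1 - δ/2 ≤ klDiv (tilted P1 P2 lamB) P1 ∧
        E.2 - δ/2 ≤ klDiv (tilted P1 P2 lamA) P2 ∧
        (thrHT P1 P2 lamA = thrHT P1 P2 lamB ∨
          (γ ≤ klDiv (tilted P1 P2 lamA) P1 ∧ γ ≤ klDiv (tilted P1 P2 lamB) P2)) := by
    rcases hERg with hRFL | hbox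
    · obtain ⟨l0, hl0, hx1, hx2⟩ := hRFL
      exact ⟨l0, l0, hl0, hl0, by linarith, by linarith, Or.inl rfl⟩
    · obtain ⟨⟨hE1lo, hE1hi⟩, hE2lo, hE2hi⟩ := hbox
      have hE1hi' : E.1 ≤ sSup {e | ∃ lam ∈ Set.Icc (0:ℝ) 1,
          γ ≤ klDiv (tilted P1 P2 lam) P2 ∧ e = klDiv (tilted P1 P2 lam) P1} := hE1hi
      have hE2hi' : E.2 ≤ sSup {e | ∃ lam ∈ Set.Icc (0:ℝ) 1,
          γ ≤ klDiv (tilted P1 P2 lam) P1 ∧ e = klDiv (tilted P1 P2 lam) P2} := hE2hi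
      by_cases hn1 : {e | ∃ lam ∈ Set.Icc (0:ℝ) 1,
          γ ≤ klDiv (tilted P1 P2 lam) P2 ∧ e = klDiv (tilted P1 P2 lam) P1}.Nonempty
      · by_cases hn2 : {e | ∃ lam ∈ Set.Icc (0:ℝ) 1,
            γ ≤ klDiv (tilted P1 P2 lam) P1 ∧ e = klDiv (tilted P1 P2 lam) P2}.Nonempty
        · obtain ⟨e1, he1S, hlt1⟩ := exists_lt_of_lt_csSup hn1
            (lt_of_lt_of_le (show E.1 - δ/2 < E.1 by linarith) hE1hi')
          obtain ⟨lamB, hlamB, hgB, heB⟩ := he1S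
          obtain ⟨e2, he2S, hlt2⟩ := exists_lt_of_lt_csSup hn2
            (lt_of_lt_of_le (show E.2 - δ/2 < E.2 by linarith) hE2hi')
          obtain ⟨lamA, hlamA, hgA, heA⟩ := he2S
          exact ⟨lamA, lamB, hlamA, hlamB, by rw [← heB]; linarith,
            by rw [← heA]; linarith, Or.inr ⟨hgA, hgB⟩⟩
        · have hz : E2exp P1 P2 γ = 0 := by
            unfold E2exp
            rw [Set.not_nonempty_iff_eq_empty.mp hn2, Real.sSup_empty]
          rw [hz] at hE2hi
          obtain ⟨e1, he1S, hlt1⟩ := exists_lt_of_lt_csSup hn1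
            (lt_of_lt_of_le (show E.1 - δ/2 < E.1 by linarith) hE1hi')
          obtain ⟨lamB, hlamB, hgB, heB⟩ := he1S
          refine ⟨lamB, lamB, hlamB, hlamB, by rw [← heB]; linarith, ?_, Or.inl rfl⟩
          have := hDnn2 lamB
          linarith
      · have hz : E1exp P1 P2 γ = 0 := by
          unfold E1exp
          rw [Set.not_nonempty_iff_eq_empty.mp hn1, Real.sSup_empty]
        rw [hz] at hE1hi
        by_cases hn2 : {e | ∃ lam ∈ Set.Icc (0:ℝ) 1,
            γ ≤ klDiv (tilted P1 P2 lam) P1 ∧ e = klDiv (tilted P1 P2 lam) P2}.Nonempty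
        · obtain ⟨e2, he2S, hlt2⟩ := exists_lt_of_lt_csSup hn2
            (lt_of_lt_of_le (show E.2 - δ/2 < E.2 by linarith) hE2hi')
          obtain ⟨lamA, hlamA, hgA, heA⟩ := he2S
          refine ⟨lamA, lamA, hlamA, hlamA, ?_, by rw [← heA]; linarith, Or.inl rfl⟩
          have := hDnn1 lamA
          linarith
        · have hz2 : E2exp P1 P2 γ = 0 := by
            unfold E2exp
            rw [Set.not_nonempty_iff_eq_empty.mp hn2, Real.sSup_empty]
          rw [hz2] at hE2hi
          refine ⟨0, 0, Set.left_mem_Icc.mpr zero_le_one,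
            Set.left_mem_Icc.mpr zero_le_one, ?_, ?_, Or.inl rfl⟩
          · have := hDnn1 0; linarith
          · have := hDnn2 0; linarith
  refine ⟨max 1 (Nat.ceil (2 * Real.log 2 / δ)), fun n hn => ?_⟩
  have hnR : (0:ℝ) ≤ n := Nat.cast_nonneg n
  have hlog2 : Real.log 2 ≤ n * (δ/2) := by
    have hcl : ((Nat.ceil (2 * Real.log 2 / δ) : ℕ) : ℝ) ≤ n :=
      Nat.cast_le.mpr (le_trans (le_max_right _ _) hn)
    have h2 : 2 * Real.log 2 / δ ≤ n := le_trans (Nat.le_ceil _) hcl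
    rw [div_le_iff₀ hδ] at h2
    nlinarith
  refine ⟨twoStage P1 P2 n K hK (thrHT P1 P2 lamA) (thrHT P1 P2 lamB) (thrHT P1 P2 lamS),
    ?_, ?_, ?_, ?_⟩
  · -- late P1
    refine le_trans (twoStage_late_le P1 P2 hK (thrHT P1 P2 lamA) (thrHT P1 P2 lamB)
      (thrHT P1 P2 lamS) P1 h1.1 h1.2) ?_
    rcases hdisj with hab | ⟨hgA, hgB⟩
    · rw [Finset.sum_eq_zero]
      · positivity
      · intro y _
        rw [if_neg, mul_zero]
        rintro ⟨hx1, hx2⟩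
        rw [hab] at hx2
        linarith
    · have hmid : ∑ y : Fin n → X, prodProb P1 y *
          (if thrHT P1 P2 lamB * n < Slst P1 P2 (List.ofFn y) ∧
              Slst P1 P2 (List.ofFn y) < thrHT P1 P2 lamA * n then (1:ℝ) else 0)
          ≤ ∑ y : Fin n → X, prodProb P1 y *
            (if Slst P1 P2 (List.ofFn y) ≤ thrHT P1 P2 lamA * n then (1:ℝ) else 0) :=
        Finset.sum_le_sum (fun y _ => mul_le_mul_of_nonneg_left
          (ind_mono (fun hc => hc.2.le)) (Finset.prod_nonneg (fun i _ => h1.1 _)))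
      refine le_trans hmid (le_trans (chernoffD1 P1 P2 hs1 hs2 hlamA n)
        (Real.exp_le_exp.mpr ?_))
      nlinarith [mul_le_mul_of_nonneg_left hgA hnR]
  · -- late P2
    refine le_trans (twoStage_late_le P1 P2 hK (thrHT P1 P2 lamA) (thrHT P1 P2 lamB)
      (thrHT P1 P2 lamS) P2 h2.1 h2.2) ?_
    rcases hdisj with hab | ⟨hgA, hgB⟩
    · rw [Finset.sum_eq_zero]
      · positivity
      · intro y _
        rw [if_neg, mul_zero]
        rintro ⟨hx1, hx2⟩
        rw [hab] at hx2
        linarith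
    · have hmid : ∑ y : Fin n → X, prodProb P2 y *
          (if thrHT P1 P2 lamB * n < Slst P1 P2 (List.ofFn y) ∧
              Slst P1 P2 (List.ofFn y) < thrHT P1 P2 lamA * n then (1:ℝ) else 0)
          ≤ ∑ y : Fin n → X, prodProb P2 y *
            (if thrHT P1 P2 lamB * n ≤ Slst P1 P2 (List.ofFn y) then (1:ℝ) else 0) :=
        Finset.sum_le_sum (fun y _ => mul_le_mul_of_nonneg_left
          (ind_mono (fun hc => hc.1.le)) (Finset.prod_nonneg (fun i _ => h2.1 _)))
      refine le_trans hmid (le_trans (chernoffD2 P1 P2 hs1 hs2 hlamB n)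
        (Real.exp_le_exp.mpr ?_))
      nlinarith [mul_le_mul_of_nonneg_left hgB hnR]
  · -- err1
    refine le_trans (twoStage_err1_le P1 P2 hK (thrHT P1 P2 lamA) (thrHT P1 P2 lamB)
      (thrHT P1 P2 lamS) h1.1 h1.2) ?_
    have t1 := chernoffD1 P1 P2 hs1 hs2 hlamB n
    have t2 := chernoffD1 P1 P2 hs1 hs2 hlamS (K * n)
    have e1 : Real.exp (-(↑n * klDiv (tilted P1 P2 lamB) P1))
        ≤ Real.exp (-((E.1 - δ/2) * n)) :=
      Real.exp_le_exp.mpr (by nlinarith [mul_le_mul_of_nonneg_left hDB1 hnR])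
    have e2 : Real.exp (-((↑(K * n) : ℝ) * klDiv (tilted P1 P2 lamS) P1))
        ≤ Real.exp (-((E.1 - δ/2) * n)) := by
      apply Real.exp_le_exp.mpr
      push_cast
      nlinarith [mul_le_mul_of_nonneg_right hE1S hnR, mul_nonneg hnR hδ.le]
    have h2e : (2:ℝ) ≤ Real.exp (n * (δ/2)) := by
      calc (2:ℝ) = Real.exp (Real.log 2) := (Real.exp_log two_pos).symm
        _ ≤ _ := Real.exp_le_exp.mpr hlog2
    have efin : 2 * Real.exp (-((E.1 - δ/2) * n)) ≤ Real.exp (-((E.1 - δ) * n)) := by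
      calc 2 * Real.exp (-((E.1 - δ/2) * n))
          ≤ Real.exp (n * (δ/2)) * Real.exp (-((E.1 - δ/2) * n)) :=
            mul_le_mul_of_nonneg_right h2e (Real.exp_pos _).le
        _ = Real.exp (-((E.1 - δ) * n)) := by rw [← Real.exp_add]; congr 1; ring
    linarith
  · -- err2
    refine le_trans (twoStage_err2_le P1 P2 hK (thrHT P1 P2 lamA) (thrHT P1 P2 lamB)
      (thrHT P1 P2 lamS) h2.1 h2.2) ?_
    have t1 := chernoffD2 P1 P2 hs1 hs2 hlamA n
    have t2 := chernoffD2 P1 P2 hs1 hs2 hlamS (K * n)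
    have e1 : Real.exp (-(↑n * klDiv (tilted P1 P2 lamA) P2))
        ≤ Real.exp (-((E.2 - δ/2) * n)) :=
      Real.exp_le_exp.mpr (by nlinarith [mul_le_mul_of_nonneg_left hDA2 hnR])
    have e2 : Real.exp (-((↑(K * n) : ℝ) * klDiv (tilted P1 P2 lamS) P2))
        ≤ Real.exp (-((E.2 - δ/2) * n)) := by
      apply Real.exp_le_exp.mpr
      push_cast
      nlinarith [mul_le_mul_of_nonneg_right hE2S hnR, mul_nonneg hnR hδ.le]
    have h2e : (2:ℝ) ≤ Real.exp (n * (δ/2)) := by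
      calc (2:ℝ) = Real.exp (Real.log 2) := (Real.exp_log two_pos).symm
        _ ≤ _ := Real.exp_le_exp.mpr hlog2
    have efin : 2 * Real.exp (-((E.2 - δ/2) * n)) ≤ Real.exp (-((E.2 - δ) * n)) := by
      calc 2 * Real.exp (-((E.2 - δ/2) * n))
          ≤ Real.exp (n * (δ/2)) * Real.exp (-((E.2 - δ/2) * n)) :=
            mul_le_mul_of_nonneg_right h2e (Real.exp_pos _).le
        _ = Real.exp (-((E.2 - δ) * n)) := by rw [← Real.exp_add]; congr 1; ring
    linarith

end
end

section
/- (Achievability for tests with a rejection option.) For every γ ≥ 0, every exponent triple (E1, E2, E_Ω) with (E1,E2) ∈ R_γ and E_Ω = γ is achievable by fixed-length hypothesis tests with a rejection option; i.e., R_γ × {E_Ω = γ} ⊆ R_Ω^(γ). -/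
open Real Finset
open scoped Classical

noncomputable section

variable {X : Type} [Fintype X]

/-- A fixed-length hypothesis test with a rejection option and stopping time `τ ≤ n`
almost surely: the decision (`0 ↦` accept `H1`, `1 ↦` accept `H2`, `2 ↦` reject both)
is taken at the stopping time. -/
structure RejTest (X : Type) [Fintype X] (n : ℕ) where
  τ : (Fin n → X) → ℕ
  τ_le : ∀ x, τ x ≤ n
  τ_stopping : ∀ x x', histX x' (τ x) = histX x (τ x) → τ x' = τ x
  dec : List X → Fin 3

/-- `P1(A2^τ)`. -/
def rejErr1 (P1 : X → ℝ) {n : ℕ} (T : RejTest X n) : ℝ :=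
  ∑ x : Fin n → X, prodProb P1 x * (if T.dec (histX x (T.τ x)) = 1 then 1 else 0)

/-- `P2(A1^τ)`. -/
def rejErr2 (P2 : X → ℝ) {n : ℕ} (T : RejTest X n) : ℝ :=
  ∑ x : Fin n → X, prodProb P2 x * (if T.dec (histX x (T.τ x)) = 0 then 1 else 0)

/-- `P1(A_Ω^τ) + P2(A_Ω^τ)`. -/
def rejProb (P1 P2 : X → ℝ) {n : ℕ} (T : RejTest X n) : ℝ :=
  (∑ x : Fin n → X, prodProb P1 x * (if T.dec (histX x (T.τ x)) = 2 then 1 else 0)) +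
  (∑ x : Fin n → X, prodProb P2 x * (if T.dec (histX x (T.τ x)) = 2 then 1 else 0))

/-- The exponent triple `(E1, E2, EΩ)` is achievable by fixed-length hypothesis tests
with a rejection option. -/
def RejAchievable (P1 P2 : X → ℝ) (E1 E2 EΩ : ℝ) : Prop :=
  ∀ δ > 0, ∃ N0 : ℕ, ∀ n : ℕ, n ≥ N0 → ∃ T : RejTest X n,
    rejErr1 P1 T ≤ Real.exp (-((E1 - δ) * n)) ∧
    rejErr2 P2 T ≤ Real.exp (-((E2 - δ) * n)) ∧
    rejProb P1 P2 T ≤ Real.exp (-((EΩ - δ) * n))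

/-- `R_Ω^(γ)`: the region of `(E1,E2)` such that `(E1,E2,γ)` is achievable by tests with
a rejection option. -/
def ROmega (P1 P2 : X → ℝ) (γ : ℝ) : Set (ℝ × ℝ) :=
  { E | RejAchievable P1 P2 E.1 E.2 γ }

namespace RejectionAux

variable {X : Type} [Fintype X]

lemma sum_prod_fn (n : ℕ) (f : X → ℝ) :
    ∑ x : Fin n → X, ∏ i, f (x i) = (∑ a, f a) ^ n := by
  classical
  rw [← Fintype.piFinset_univ, ← Finset.prod_univ_sum]
  simp

lemma sum_prodProb (P : X → ℝ) (hP : ∑ a, P a = 1) (n : ℕ) :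
    ∑ x : Fin n → X, prodProb P x = 1 := by
  simp [prodProb, sum_prod_fn, hP]

lemma chernoff_core (P : X → ℝ) (hP : ∀ x, 0 ≤ P x) (g : X → ℝ) (t : ℝ) (n : ℕ)
    (E : (Fin n → X) → Prop) [DecidablePred E] (hE : ∀ x, E x → t ≤ ∑ i, g (x i)) :
    ∑ x : Fin n → X, prodProb P x * (if E x then (1:ℝ) else 0)
      ≤ Real.exp (-t) * (∑ a, P a * Real.exp (g a)) ^ n := by
  have key : ∀ x : Fin n → X, prodProb P x * (if E x then (1:ℝ) else 0)
      ≤ Real.exp (-t) * ∏ i, (P (x i) * Real.exp (g (x i))) := by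
    intro x
    have hprod : (0:ℝ) ≤ prodProb P x := Finset.prod_nonneg fun i _ => hP _
    have hrhs : Real.exp (-t) * ∏ i, (P (x i) * Real.exp (g (x i)))
        = prodProb P x * Real.exp ((∑ i, g (x i)) - t) := by
      rw [Finset.prod_mul_distrib, ← Real.exp_sum, sub_eq_add_neg, Real.exp_add, prodProb]
      ring
    rw [hrhs]
    by_cases hx : E x
    · have hone : (1:ℝ) ≤ Real.exp ((∑ i, g (x i)) - t) :=
        Real.one_le_exp (sub_nonneg.2 (hE x hx))
      rw [if_pos hx, mul_one]
      exact le_mul_of_one_le_right hprod hone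
    · rw [if_neg hx, mul_zero]
      positivity
  calc ∑ x : Fin n → X, prodProb P x * (if E x then (1:ℝ) else 0)
      ≤ ∑ x : Fin n → X, Real.exp (-t) * ∏ i, (P (x i) * Real.exp (g (x i))) :=
        Finset.sum_le_sum fun x _ => key x
    _ = Real.exp (-t) * (∑ a, P a * Real.exp (g a)) ^ n := by
        rw [← Finset.mul_sum, sum_prod_fn n (fun a => P a * Real.exp (g a))]

lemma exp_pow_bound (Zv : ℝ) (hZ : 0 < Zv) (μ c : ℝ) (n : ℕ) :
    Real.exp (-(μ * (n * c))) * Zv ^ n = Real.exp (-(n * (μ * c - Real.log Zv))) := by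
  have hzn : Zv ^ n = Real.exp (n * Real.log Zv) := by
    rw [Real.exp_nat_mul, Real.exp_log hZ]
  rw [hzn, ← Real.exp_add]
  congr 1; ring

/-- The normalizing constant of the tilted distribution. -/
def Zf (P1 P2 : X → ℝ) (lam : ℝ) : ℝ := ∑ a, P1 a ^ (1 - lam) * P2 a ^ lam

/-- The mean of the log-likelihood ratio under the tilted distribution. -/
def cc (P1 P2 : X → ℝ) (lam : ℝ) : ℝ := ∑ a, tilted P1 P2 lam a * Real.log (P2 a / P1 a)

variable {P1 P2 : X → ℝ}

lemma Zpos [Nonempty X] (hs1 : ∀ x, 0 < P1 x) (hs2 : ∀ x, 0 < P2 x) (lam : ℝ) :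
    0 < Zf P1 P2 lam :=
  Finset.sum_pos (fun a _ => mul_pos (Real.rpow_pos_of_pos (hs1 a) _)
    (Real.rpow_pos_of_pos (hs2 a) _)) (by simp)

lemma tilted_sum_one [Nonempty X] (hs1 : ∀ x, 0 < P1 x) (hs2 : ∀ x, 0 < P2 x) (lam : ℝ) :
    ∑ a, tilted P1 P2 lam a = 1 := by
  have : (∑ a, tilted P1 P2 lam a) = (∑ a, P1 a ^ (1 - lam) * P2 a ^ lam) / Zf P1 P2 lam := by
    simp only [tilted]
    rw [← Finset.sum_div]; rfl
  rw [this]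
  exact div_self (Zpos hs1 hs2 lam).ne'

lemma ZP1 (hs1 : ∀ x, 0 < P1 x) (hs2 : ∀ x, 0 < P2 x) (lam : ℝ) :
    ∑ a, P1 a * Real.exp (lam * Real.log (P2 a / P1 a)) = Zf P1 P2 lam := by
  refine Finset.sum_congr rfl fun a _ => ?_
  rw [mul_comm lam, ← Real.rpow_def_of_pos (div_pos (hs2 a) (hs1 a)),
    Real.div_rpow (hs2 a).le (hs1 a).le,
    Real.rpow_sub (hs1 a), Real.rpow_one]
  field_simp

lemma ZP2 (hs1 : ∀ x, 0 < P1 x) (hs2 : ∀ x, 0 < P2 x) (lam : ℝ) :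
    ∑ a, P2 a * Real.exp ((lam - 1) * Real.log (P2 a / P1 a)) = Zf P1 P2 lam := by
  refine Finset.sum_congr rfl fun a _ => ?_
  rw [mul_comm (lam - 1), ← Real.rpow_def_of_pos (div_pos (hs2 a) (hs1 a)),
    Real.div_rpow (hs2 a).le (hs1 a).le]
  have h2 : P2 a * P2 a ^ (lam - 1) = P2 a ^ lam := by
    calc P2 a * P2 a ^ (lam - 1) = P2 a ^ (1:ℝ) * P2 a ^ (lam - 1) := by rw [Real.rpow_one]
      _ = P2 a ^ (1 + (lam - 1)) := (Real.rpow_add (hs2 a) _ _).symm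
      _ = P2 a ^ lam := by norm_num
  have h1 : P1 a ^ (1 - lam) * P1 a ^ (lam - 1) = 1 := by
    rw [← Real.rpow_add (hs1 a)]; norm_num
  calc P2 a * (P2 a ^ (lam - 1) / P1 a ^ (lam - 1))
      = (P2 a * P2 a ^ (lam - 1)) * (P1 a ^ (1 - lam) * P1 a ^ (lam - 1)) / P1 a ^ (lam - 1) := by
        rw [h1]; ring
    _ = P1 a ^ (1 - lam) * P2 a ^ lam := by
        rw [h2]
        have := (Real.rpow_pos_of_pos (hs1 a) (lam - 1)).ne'
        field_simp

lemma log_tilted_div1 [Nonempty X] (hs1 : ∀ x, 0 < P1 x) (hs2 : ∀ x, 0 < P2 x) (lam : ℝ) (a : X) :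
    Real.log (tilted P1 P2 lam a / P1 a)
      = lam * Real.log (P2 a / P1 a) - Real.log (Zf P1 P2 lam) := by
  have hZ := Zpos hs1 hs2 lam
  have hdiv : tilted P1 P2 lam a / P1 a = (P2 a / P1 a) ^ lam / Zf P1 P2 lam := by
    rw [tilted, Real.div_rpow (hs2 a).le (hs1 a).le, Real.rpow_sub (hs1 a), Real.rpow_one]
    have h1 := (hs1 a).ne'
    have h2 := (Real.rpow_pos_of_pos (hs1 a) lam).ne'
    show _ / Zf P1 P2 lam / _ = _
    field_simp
  rw [hdiv, Real.log_div (Real.rpow_pos_of_pos (div_pos (hs2 a) (hs1 a)) lam).ne' hZ.ne',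
    Real.log_rpow (div_pos (hs2 a) (hs1 a))]

lemma log_tilted_div2 [Nonempty X] (hs1 : ∀ x, 0 < P1 x) (hs2 : ∀ x, 0 < P2 x) (lam : ℝ) (a : X) :
    Real.log (tilted P1 P2 lam a / P2 a)
      = (lam - 1) * Real.log (P2 a / P1 a) - Real.log (Zf P1 P2 lam) := by
  have hZ := Zpos hs1 hs2 lam
  have hdiv : tilted P1 P2 lam a / P2 a = (P2 a / P1 a) ^ (lam - 1) / Zf P1 P2 lam := by
    rw [tilted, Real.div_rpow (hs2 a).le (hs1 a).le]
    have h2 : P2 a ^ lam = P2 a * P2 a ^ (lam - 1) := by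
      calc P2 a ^ lam = P2 a ^ (1 + (lam - 1)) := by norm_num
        _ = P2 a ^ (1:ℝ) * P2 a ^ (lam - 1) := Real.rpow_add (hs2 a) _ _
        _ = P2 a * P2 a ^ (lam - 1) := by rw [Real.rpow_one]
    have h1 : P1 a ^ (1 - lam) = (P1 a ^ (lam - 1))⁻¹ := by
      rw [show (1 : ℝ) - lam = -(lam - 1) by ring, Real.rpow_neg (hs1 a).le]
    rw [h2, h1]
    have e1 := (Real.rpow_pos_of_pos (hs1 a) (lam - 1)).ne'
    have e2 := (hs2 a).ne'
    show _ / Zf P1 P2 lam / _ = _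
    field_simp
  rw [hdiv, Real.log_div (Real.rpow_pos_of_pos (div_pos (hs2 a) (hs1 a)) _).ne' hZ.ne',
    Real.log_rpow (div_pos (hs2 a) (hs1 a))]

lemma klD1 [Nonempty X] (hs1 : ∀ x, 0 < P1 x) (hs2 : ∀ x, 0 < P2 x) (lam : ℝ) :
    klDiv (tilted P1 P2 lam) P1 = lam * cc P1 P2 lam - Real.log (Zf P1 P2 lam) := by
  rw [klDiv]
  rw [Finset.sum_congr rfl fun a _ => by
    rw [log_tilted_div1 hs1 hs2 lam a, mul_sub, mul_left_comm]]
  rw [Finset.sum_sub_distrib, ← Finset.mul_sum, ← Finset.sum_mul,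
    tilted_sum_one hs1 hs2, one_mul, cc]

lemma klD2 [Nonempty X] (hs1 : ∀ x, 0 < P1 x) (hs2 : ∀ x, 0 < P2 x) (lam : ℝ) :
    klDiv (tilted P1 P2 lam) P2 = (lam - 1) * cc P1 P2 lam - Real.log (Zf P1 P2 lam) := by
  rw [klDiv]
  rw [Finset.sum_congr rfl fun a _ => by
    rw [log_tilted_div2 hs1 hs2 lam a, mul_sub, mul_left_comm]]
  rw [Finset.sum_sub_distrib, ← Finset.mul_sum, ← Finset.sum_mul,
    tilted_sum_one hs1 hs2, one_mul, cc]

lemma stat_full {n : ℕ} (x : Fin n → X) (f : X → ℝ) :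
    ((histX x n).map f).sum = ∑ i, f (x i) := by
  rw [histX, List.take_of_length_le (by simp), List.map_ofFn, List.sum_ofFn]
  rfl

/-- The two-threshold likelihood-ratio test and its error bounds. -/
lemma main_test [Nonempty X] (hs1 : ∀ x, 0 < P1 x) (hs2 : ∀ x, 0 < P2 x)
    {lam1 lam2 : ℝ} (h1a : 0 ≤ lam1) (h1b : lam1 ≤ 1) (h2a : 0 ≤ lam2) (h2b : lam2 ≤ 1)
    (n : ℕ) :
    ∃ T : RejTest X n,
      rejErr1 P1 T ≤ Real.exp (-(n * klDiv (tilted P1 P2 lam1) P1)) ∧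
      rejErr2 P2 T ≤ Real.exp (-(n * klDiv (tilted P1 P2 lam2) P2)) ∧
      rejProb P1 P2 T ≤ Real.exp (-(n * klDiv (tilted P1 P2 lam2) P1))
          + Real.exp (-(n * klDiv (tilted P1 P2 lam1) P2)) ∧
      (cc P1 P2 lam1 ≤ cc P1 P2 lam2 → rejProb P1 P2 T ≤ 0) := by
  classical
  set A := (n : ℝ) * cc P1 P2 lam1 with hA
  set B := (n : ℝ) * cc P1 P2 lam2 with hB
  set St : List X → ℝ := fun l => (l.map fun y => Real.log (P2 y / P1 y)).sum with hSt
  set Sx : (Fin n → X) → ℝ := fun x => ∑ i, Real.log (P2 (x i) / P1 (x i)) with hSx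
  have hstat : ∀ x : Fin n → X, St (histX x n) = Sx x := fun x =>
    stat_full x (fun y => Real.log (P2 y / P1 y))
  refine ⟨⟨fun _ => n, fun _ => le_rfl, fun _ _ _ => rfl,
    fun l => if St l ≤ B then 0 else if A ≤ St l then 1 else 2⟩, ?_, ?_, ?_, ?_⟩
  · -- rejErr1
    show ∑ x : Fin n → X, prodProb P1 x *
        (if (if St (histX x n) ≤ B then (0 : Fin 3) else if A ≤ St (histX x n) then 1 else 2) = 1
          then (1:ℝ) else 0) ≤ _
    have step : ∀ x : Fin n → X, prodProb P1 x *
        (if (if St (histX x n) ≤ B then (0 : Fin 3) else if A ≤ St (histX x n) then 1 else 2) = 1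
          then (1:ℝ) else 0) ≤ prodProb P1 x * (if A ≤ Sx x then (1:ℝ) else 0) := by
      intro x
      refine mul_le_mul_of_nonneg_left ?_ (Finset.prod_nonneg fun i _ => (hs1 _).le)
      rw [hstat x]
      split_ifs <;> simp_all
    calc _ ≤ ∑ x : Fin n → X, prodProb P1 x * (if A ≤ Sx x then (1:ℝ) else 0) :=
          Finset.sum_le_sum fun x _ => step x
      _ ≤ Real.exp (-(lam1 * ((n:ℝ) * cc P1 P2 lam1))) *
            (∑ a, P1 a * Real.exp (lam1 * Real.log (P2 a / P1 a))) ^ n := by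
          refine chernoff_core P1 (fun x => (hs1 x).le)
            (fun a => lam1 * Real.log (P2 a / P1 a)) _ n (fun x => A ≤ Sx x) ?_
          intro x hx
          have hms : ∑ i, lam1 * Real.log (P2 (x i) / P1 (x i)) = lam1 * Sx x := by
            rw [hSx, Finset.mul_sum]
          rw [hms]
          rw [hA] at hx
          exact mul_le_mul_of_nonneg_left hx h1a
      _ = Real.exp (-(n * klDiv (tilted P1 P2 lam1) P1)) := by
          rw [ZP1 hs1 hs2 lam1, klD1 hs1 hs2]
          exact exp_pow_bound _ (Zpos hs1 hs2 lam1) _ _ n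
  · -- rejErr2
    show ∑ x : Fin n → X, prodProb P2 x *
        (if (if St (histX x n) ≤ B then (0 : Fin 3) else if A ≤ St (histX x n) then 1 else 2) = 0
          then (1:ℝ) else 0) ≤ _
    have step : ∀ x : Fin n → X, prodProb P2 x *
        (if (if St (histX x n) ≤ B then (0 : Fin 3) else if A ≤ St (histX x n) then 1 else 2) = 0
          then (1:ℝ) else 0) ≤ prodProb P2 x * (if Sx x ≤ B then (1:ℝ) else 0) := by
      intro x
      refine mul_le_mul_of_nonneg_left ?_ (Finset.prod_nonneg fun i _ => (hs2 _).le)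
      rw [hstat x]
      split_ifs <;> simp_all
    calc _ ≤ ∑ x : Fin n → X, prodProb P2 x * (if Sx x ≤ B then (1:ℝ) else 0) :=
          Finset.sum_le_sum fun x _ => step x
      _ ≤ Real.exp (-((lam2 - 1) * ((n:ℝ) * cc P1 P2 lam2))) *
            (∑ a, P2 a * Real.exp ((lam2 - 1) * Real.log (P2 a / P1 a))) ^ n := by
          refine chernoff_core P2 (fun x => (hs2 x).le)
            (fun a => (lam2 - 1) * Real.log (P2 a / P1 a)) _ n (fun x => Sx x ≤ B) ?_
          intro x hx
          have hms : ∑ i, (lam2 - 1) * Real.log (P2 (x i) / P1 (x i)) = (lam2 - 1) * Sx x := by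
            rw [hSx, Finset.mul_sum]
          rw [hms]
          rw [hB] at hx
          exact mul_le_mul_of_nonpos_left hx (by linarith)
      _ = Real.exp (-(n * klDiv (tilted P1 P2 lam2) P2)) := by
          rw [ZP2 hs1 hs2 lam2, klD2 hs1 hs2]
          exact exp_pow_bound _ (Zpos hs1 hs2 lam2) _ _ n
  · -- rejProb general bound
    show (∑ x : Fin n → X, prodProb P1 x *
        (if (if St (histX x n) ≤ B then (0 : Fin 3) else if A ≤ St (histX x n) then 1 else 2) = 2
          then (1:ℝ) else 0)) +
      (∑ x : Fin n → X, prodProb P2 x *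
        (if (if St (histX x n) ≤ B then (0 : Fin 3) else if A ≤ St (histX x n) then 1 else 2) = 2
          then (1:ℝ) else 0)) ≤ _
    have part1 : (∑ x : Fin n → X, prodProb P1 x *
        (if (if St (histX x n) ≤ B then (0 : Fin 3) else if A ≤ St (histX x n) then 1 else 2) = 2
          then (1:ℝ) else 0)) ≤ Real.exp (-(n * klDiv (tilted P1 P2 lam2) P1)) := by
      have step : ∀ x : Fin n → X, prodProb P1 x *
          (if (if St (histX x n) ≤ B then (0 : Fin 3) else if A ≤ St (histX x n) then 1 else 2) = 2
            then (1:ℝ) else 0) ≤ prodProb P1 x * (if B ≤ Sx x then (1:ℝ) else 0) := by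
        intro x
        refine mul_le_mul_of_nonneg_left ?_ (Finset.prod_nonneg fun i _ => (hs1 _).le)
        rw [hstat x]
        split_ifs with hc1 hc2 <;> simp_all <;> linarith
      calc _ ≤ ∑ x : Fin n → X, prodProb P1 x * (if B ≤ Sx x then (1:ℝ) else 0) :=
            Finset.sum_le_sum fun x _ => step x
        _ ≤ Real.exp (-(lam2 * ((n:ℝ) * cc P1 P2 lam2))) *
              (∑ a, P1 a * Real.exp (lam2 * Real.log (P2 a / P1 a))) ^ n := by
            refine chernoff_core P1 (fun x => (hs1 x).le)
              (fun a => lam2 * Real.log (P2 a / P1 a)) _ n (fun x => B ≤ Sx x) ?_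
            intro x hx
            have hms : ∑ i, lam2 * Real.log (P2 (x i) / P1 (x i)) = lam2 * Sx x := by
              rw [hSx, Finset.mul_sum]
            rw [hms]
            rw [hB] at hx
            exact mul_le_mul_of_nonneg_left hx h2a
        _ = Real.exp (-(n * klDiv (tilted P1 P2 lam2) P1)) := by
            rw [ZP1 hs1 hs2 lam2, klD1 hs1 hs2]
            exact exp_pow_bound _ (Zpos hs1 hs2 lam2) _ _ n
    have part2 : (∑ x : Fin n → X, prodProb P2 x *
        (if (if St (histX x n) ≤ B then (0 : Fin 3) else if A ≤ St (histX x n) then 1 else 2) = 2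
          then (1:ℝ) else 0)) ≤ Real.exp (-(n * klDiv (tilted P1 P2 lam1) P2)) := by
      have step : ∀ x : Fin n → X, prodProb P2 x *
          (if (if St (histX x n) ≤ B then (0 : Fin 3) else if A ≤ St (histX x n) then 1 else 2) = 2
            then (1:ℝ) else 0) ≤ prodProb P2 x * (if Sx x ≤ A then (1:ℝ) else 0) := by
        intro x
        refine mul_le_mul_of_nonneg_left ?_ (Finset.prod_nonneg fun i _ => (hs2 _).le)
        rw [hstat x]
        by_cases hc1 : Sx x ≤ B
        · rw [if_pos hc1, if_neg (by decide)]; split_ifs <;> norm_num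
        · by_cases hc2 : A ≤ Sx x
          · rw [if_neg hc1, if_pos hc2, if_neg (by decide)]; split_ifs <;> norm_num
          · rw [if_neg hc1, if_neg hc2, if_pos rfl, if_pos (not_le.1 hc2).le]
      calc _ ≤ ∑ x : Fin n → X, prodProb P2 x * (if Sx x ≤ A then (1:ℝ) else 0) :=
            Finset.sum_le_sum fun x _ => step x
        _ ≤ Real.exp (-((lam1 - 1) * ((n:ℝ) * cc P1 P2 lam1))) *
              (∑ a, P2 a * Real.exp ((lam1 - 1) * Real.log (P2 a / P1 a))) ^ n := by
            refine chernoff_core P2 (fun x => (hs2 x).le)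
              (fun a => (lam1 - 1) * Real.log (P2 a / P1 a)) _ n (fun x => Sx x ≤ A) ?_
            intro x hx
            have hms : ∑ i, (lam1 - 1) * Real.log (P2 (x i) / P1 (x i)) = (lam1 - 1) * Sx x := by
              rw [hSx, Finset.mul_sum]
            rw [hms]
            rw [hA] at hx
            exact mul_le_mul_of_nonpos_left hx (by linarith)
        _ = Real.exp (-(n * klDiv (tilted P1 P2 lam1) P2)) := by
            rw [ZP2 hs1 hs2 lam1, klD2 hs1 hs2]
            exact exp_pow_bound _ (Zpos hs1 hs2 lam1) _ _ n
    exact add_le_add part1 part2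
  · -- rejProb zero when thresholds ordered
    intro hc
    have hAB : A ≤ B := mul_le_mul_of_nonneg_left hc (Nat.cast_nonneg n)
    have hz : ∀ x : Fin n → X,
        (if (if St (histX x n) ≤ B then (0 : Fin 3) else if A ≤ St (histX x n) then 1 else 2) = 2
          then (1:ℝ) else 0) = 0 := by
      intro x
      by_cases h : St (histX x n) ≤ B
      · rw [if_pos h]; exact if_neg (by decide)
      · have h2 : A ≤ St (histX x n) := le_trans hAB (not_le.1 h).le
        rw [if_neg h, if_pos h2]; exact if_neg (by decide)
    show (∑ x : Fin n → X, prodProb P1 x *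
        (if (if St (histX x n) ≤ B then (0 : Fin 3) else if A ≤ St (histX x n) then 1 else 2) = 2
          then (1:ℝ) else 0)) +
      (∑ x : Fin n → X, prodProb P2 x *
        (if (if St (histX x n) ≤ B then (0 : Fin 3) else if A ≤ St (histX x n) then 1 else 2) = 2
          then (1:ℝ) else 0)) ≤ 0
    have z1 : (∑ x : Fin n → X, prodProb P1 x *
        (if (if St (histX x n) ≤ B then (0 : Fin 3) else if A ≤ St (histX x n) then 1 else 2) = 2
          then (1:ℝ) else 0)) = 0 :=
      Finset.sum_eq_zero fun x _ => by rw [hz x, mul_zero]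
    have z2 : (∑ x : Fin n → X, prodProb P2 x *
        (if (if St (histX x n) ≤ B then (0 : Fin 3) else if A ≤ St (histX x n) then 1 else 2) = 2
          then (1:ℝ) else 0)) = 0 :=
      Finset.sum_eq_zero fun x _ => by rw [hz x, mul_zero]
    rw [z1, z2]
    norm_num

end RejectionAux

open RejectionAux

lemma exp_mono_aux {a b : ℝ} (n : ℝ) (hn : 0 ≤ n) (hab : a ≤ b) :
    Real.exp (-(n * b)) ≤ Real.exp (-(a * n)) := by
  apply Real.exp_le_exp.2
  have := mul_le_mul_of_nonneg_right hab hn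
  nlinarith


/-- **Achievability with rejection.** For every `γ ≥ 0`, every triple
`(E1,E2,E_Ω)` with `(E1,E2) ∈ R_γ` and `E_Ω = γ` is achievable by fixed-length tests
with a rejection option: `R_γ × {E_Ω = γ} ⊆ R_Ω^(γ)`. -/
theorem rejection_achievability
    {X : Type} [Fintype X]
    (P1 P2 : X → ℝ) (h1 : IsPMF P1) (h2 : IsPMF P2) (hne : P1 ≠ P2)
    (hs1 : ∀ x, 0 < P1 x) (hs2 : ∀ x, 0 < P2 x)
    (γ : ℝ) (hγ : 0 ≤ γ) :
    Rgamma P1 P2 γ ⊆ ROmega P1 P2 γ := by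
  have hXne : Nonempty X := by
    by_contra h
    rw [not_nonempty_iff] at h
    have h0 := h1.2
    rw [Finset.univ_eq_empty, Finset.sum_empty] at h0
    exact one_ne_zero h0.symm
  rintro ⟨E1, E2⟩ hE δ hδ
  refine ⟨⌈Real.log 2 / δ⌉₊ + 1, fun n hn => ?_⟩
  have hn0 : (0:ℝ) ≤ (n:ℝ) := Nat.cast_nonneg n
  have hlog2 : Real.log 2 ≤ δ * n := by
    have ha : Real.log 2 / δ ≤ ((⌈Real.log 2 / δ⌉₊ + 1 : ℕ) : ℝ) := by
      calc Real.log 2 / δ ≤ (⌈Real.log 2 / δ⌉₊ : ℝ) := Nat.le_ceil _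
        _ ≤ ((⌈Real.log 2 / δ⌉₊ + 1 : ℕ) : ℝ) := by push_cast; linarith
    have hb : ((⌈Real.log 2 / δ⌉₊ + 1 : ℕ) : ℝ) ≤ n := Nat.cast_le.2 hn
    have hc := ha.trans hb
    calc Real.log 2 = (Real.log 2 / δ) * δ := by field_simp
      _ ≤ (n : ℝ) * δ := mul_le_mul_of_nonneg_right hc hδ.le
      _ = δ * n := mul_comm _ _
  cases hE with
  | inl hFL =>
    obtain ⟨lam, hlam, hE1, hE2⟩ := hFL
    obtain ⟨T, hT1, hT2, _, hT0⟩ := main_test hs1 hs2 hlam.1 hlam.2 hlam.1 hlam.2 n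
    refine ⟨T, ?_, ?_, ?_⟩
    · exact hT1.trans (exp_mono_aux (n : ℝ) hn0 (by simp only at hE1 ⊢; linarith))
    · exact hT2.trans (exp_mono_aux (n : ℝ) hn0 (by simp only at hE2 ⊢; linarith))
    · exact (hT0 le_rfl).trans (Real.exp_pos _).le
  | inr hRect =>
    rw [Set.mem_prod] at hRect
    obtain ⟨⟨hE1l, hE1u⟩, hE2l, hE2u⟩ := hRect
    simp only at hE1l hE1u hE2l hE2u
    by_cases hS1 : ∃ lam ∈ Set.Icc (0:ℝ) 1, γ ≤ klDiv (tilted P1 P2 lam) P2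
    · by_cases hS2 : ∃ lam ∈ Set.Icc (0:ℝ) 1, γ ≤ klDiv (tilted P1 P2 lam) P1
      · -- both constraint sets nonempty
        have hx1 : ∃ lam ∈ Set.Icc (0:ℝ) 1, γ ≤ klDiv (tilted P1 P2 lam) P2 ∧
            E1 - δ < klDiv (tilted P1 P2 lam) P1 := by
          obtain ⟨lam0, hlam0, hγ0⟩ := hS1
          have hne' : {e | ∃ lam ∈ Set.Icc (0:ℝ) 1, γ ≤ klDiv (tilted P1 P2 lam) P2 ∧
              e = klDiv (tilted P1 P2 lam) P1}.Nonempty := ⟨_, lam0, hlam0, hγ0, rfl⟩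
          unfold E1exp at hE1u
          have hlt : E1 - δ < sSup {e | ∃ lam ∈ Set.Icc (0:ℝ) 1,
              γ ≤ klDiv (tilted P1 P2 lam) P2 ∧ e = klDiv (tilted P1 P2 lam) P1} :=
            lt_of_lt_of_le (by linarith) hE1u
          obtain ⟨e, ⟨lam, hlam, hγl, rfl⟩, helt⟩ := exists_lt_of_lt_csSup hne' hlt
          exact ⟨lam, hlam, hγl, helt⟩
        have hx2 : ∃ lam ∈ Set.Icc (0:ℝ) 1, γ ≤ klDiv (tilted P1 P2 lam) P1 ∧
            E2 - δ < klDiv (tilted P1 P2 lam) P2 := by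
          obtain ⟨lam0, hlam0, hγ0⟩ := hS2
          have hne' : {e | ∃ lam ∈ Set.Icc (0:ℝ) 1, γ ≤ klDiv (tilted P1 P2 lam) P1 ∧
              e = klDiv (tilted P1 P2 lam) P2}.Nonempty := ⟨_, lam0, hlam0, hγ0, rfl⟩
          unfold E2exp at hE2u
          have hlt : E2 - δ < sSup {e | ∃ lam ∈ Set.Icc (0:ℝ) 1,
              γ ≤ klDiv (tilted P1 P2 lam) P1 ∧ e = klDiv (tilted P1 P2 lam) P2} :=
            lt_of_lt_of_le (by linarith) hE2u
          obtain ⟨e, ⟨lam, hlam, hγl, rfl⟩, helt⟩ := exists_lt_of_lt_csSup hne' hlt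
          exact ⟨lam, hlam, hγl, helt⟩
        obtain ⟨lam1, hlam1, hg1, hd1⟩ := hx1
        obtain ⟨lam2, hlam2, hg2, hd2⟩ := hx2
        obtain ⟨T, hT1, hT2, hT3, _⟩ := main_test hs1 hs2 hlam1.1 hlam1.2 hlam2.1 hlam2.2 n
        refine ⟨T, ?_, ?_, ?_⟩
        · exact hT1.trans (exp_mono_aux (n : ℝ) hn0 (by linarith))
        · exact hT2.trans (exp_mono_aux (n : ℝ) hn0 (by linarith))
        · refine hT3.trans ?_
          have b1 : Real.exp (-((n:ℝ) * klDiv (tilted P1 P2 lam2) P1))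
              ≤ Real.exp (-(γ * n)) := exp_mono_aux (n : ℝ) hn0 hg2
          have b2 : Real.exp (-((n:ℝ) * klDiv (tilted P1 P2 lam1) P2))
              ≤ Real.exp (-(γ * n)) := exp_mono_aux (n : ℝ) hn0 hg1
          have b3 : Real.exp (-(γ * n)) + Real.exp (-(γ * n))
              ≤ Real.exp (-((γ - δ) * n)) := by
            have h2e : Real.exp (-(γ * n)) + Real.exp (-(γ * n))
                = Real.exp (Real.log 2) * Real.exp (-(γ * n)) := by
              rw [Real.exp_log (by norm_num : (0:ℝ) < 2)]; ring
            rw [h2e, ← Real.exp_add]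
            apply Real.exp_le_exp.2
            have hr : -((γ - δ) * n) = δ * n + -(γ * n) := by ring
            rw [hr]
            linarith
          linarith
      · -- E2exp's constraint set is empty: E2 = 0
        have hE20 : E2 = 0 := by
          unfold E2exp at hE2u
          have hempty : {e | ∃ lam ∈ Set.Icc (0:ℝ) 1, γ ≤ klDiv (tilted P1 P2 lam) P1 ∧
              e = klDiv (tilted P1 P2 lam) P2} = ∅ := by
            ext e
            simp only [Set.mem_setOf_eq, Set.mem_empty_iff_false, iff_false, not_exists]
            rintro lam ⟨hlam, hγl, rfl⟩
            exact hS2 ⟨lam, hlam, hγl⟩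
          rw [hempty, Real.sSup_empty] at hE2u
          linarith
        subst hE20
        have hx1 : ∃ lam ∈ Set.Icc (0:ℝ) 1, γ ≤ klDiv (tilted P1 P2 lam) P2 ∧
            E1 - δ < klDiv (tilted P1 P2 lam) P1 := by
          obtain ⟨lam0, hlam0, hγ0⟩ := hS1
          have hne' : {e | ∃ lam ∈ Set.Icc (0:ℝ) 1, γ ≤ klDiv (tilted P1 P2 lam) P2 ∧
              e = klDiv (tilted P1 P2 lam) P1}.Nonempty := ⟨_, lam0, hlam0, hγ0, rfl⟩
          unfold E1exp at hE1u
          have hlt : E1 - δ < sSup {e | ∃ lam ∈ Set.Icc (0:ℝ) 1,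
              γ ≤ klDiv (tilted P1 P2 lam) P2 ∧ e = klDiv (tilted P1 P2 lam) P1} :=
            lt_of_lt_of_le (by linarith) hE1u
          obtain ⟨e, ⟨lam, hlam, hγl, rfl⟩, helt⟩ := exists_lt_of_lt_csSup hne' hlt
          exact ⟨lam, hlam, hγl, helt⟩
        obtain ⟨lam1, hlam1, hg1, hd1⟩ := hx1
        obtain ⟨T, hT1, hT2, _, hT0⟩ := main_test hs1 hs2 hlam1.1 hlam1.2 hlam1.1 hlam1.2 n
        refine ⟨T, ?_, ?_, ?_⟩
        · exact hT1.trans (exp_mono_aux (n : ℝ) hn0 (by linarith))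
        · refine hT2.trans (exp_mono_aux (n : ℝ) hn0 ?_)
          show (0:ℝ) - δ ≤ klDiv (tilted P1 P2 lam1) P2
          linarith
        · exact (hT0 le_rfl).trans (Real.exp_pos _).le
    · by_cases hS2 : ∃ lam ∈ Set.Icc (0:ℝ) 1, γ ≤ klDiv (tilted P1 P2 lam) P1
      · -- E1exp's constraint set is empty: E1 = 0
        have hE10 : E1 = 0 := by
          unfold E1exp at hE1u
          have hempty : {e | ∃ lam ∈ Set.Icc (0:ℝ) 1, γ ≤ klDiv (tilted P1 P2 lam) P2 ∧
              e = klDiv (tilted P1 P2 lam) P1} = ∅ := by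
            ext e
            simp only [Set.mem_setOf_eq, Set.mem_empty_iff_false, iff_false, not_exists]
            rintro lam ⟨hlam, hγl, rfl⟩
            exact hS1 ⟨lam, hlam, hγl⟩
          rw [hempty, Real.sSup_empty] at hE1u
          linarith
        subst hE10
        have hx2 : ∃ lam ∈ Set.Icc (0:ℝ) 1, γ ≤ klDiv (tilted P1 P2 lam) P1 ∧
            E2 - δ < klDiv (tilted P1 P2 lam) P2 := by
          obtain ⟨lam0, hlam0, hγ0⟩ := hS2
          have hne' : {e | ∃ lam ∈ Set.Icc (0:ℝ) 1, γ ≤ klDiv (tilted P1 P2 lam) P1 ∧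
              e = klDiv (tilted P1 P2 lam) P2}.Nonempty := ⟨_, lam0, hlam0, hγ0, rfl⟩
          unfold E2exp at hE2u
          have hlt : E2 - δ < sSup {e | ∃ lam ∈ Set.Icc (0:ℝ) 1,
              γ ≤ klDiv (tilted P1 P2 lam) P1 ∧ e = klDiv (tilted P1 P2 lam) P2} :=
            lt_of_lt_of_le (by linarith) hE2u
          obtain ⟨e, ⟨lam, hlam, hγl, rfl⟩, helt⟩ := exists_lt_of_lt_csSup hne' hlt
          exact ⟨lam, hlam, hγl, helt⟩
        obtain ⟨lam2, hlam2, hg2, hd2⟩ := hx2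
        obtain ⟨T, hT1, hT2, _, hT0⟩ := main_test hs1 hs2 hlam2.1 hlam2.2 hlam2.1 hlam2.2 n
        refine ⟨T, ?_, ?_, ?_⟩
        · refine hT1.trans (exp_mono_aux (n : ℝ) hn0 ?_)
          show (0:ℝ) - δ ≤ klDiv (tilted P1 P2 lam2) P1
          linarith
        · exact hT2.trans (exp_mono_aux (n : ℝ) hn0 (by linarith))
        · exact (hT0 le_rfl).trans (Real.exp_pos _).le
      · -- both empty: E1 = E2 = 0; always accept H1
        have hE10 : E1 = 0 := by
          unfold E1exp at hE1u
          have hempty : {e | ∃ lam ∈ Set.Icc (0:ℝ) 1, γ ≤ klDiv (tilted P1 P2 lam) P2 ∧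
              e = klDiv (tilted P1 P2 lam) P1} = ∅ := by
            ext e
            simp only [Set.mem_setOf_eq, Set.mem_empty_iff_false, iff_false, not_exists]
            rintro lam ⟨hlam, hγl, rfl⟩
            exact hS1 ⟨lam, hlam, hγl⟩
          rw [hempty, Real.sSup_empty] at hE1u
          linarith
        have hE20 : E2 = 0 := by
          unfold E2exp at hE2u
          have hempty : {e | ∃ lam ∈ Set.Icc (0:ℝ) 1, γ ≤ klDiv (tilted P1 P2 lam) P1 ∧
              e = klDiv (tilted P1 P2 lam) P2} = ∅ := by
            ext e
            simp only [Set.mem_setOf_eq, Set.mem_empty_iff_false, iff_false, not_exists]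
            rintro lam ⟨hlam, hγl, rfl⟩
            exact hS2 ⟨lam, hlam, hγl⟩
          rw [hempty, Real.sSup_empty] at hE2u
          linarith
        subst hE10; subst hE20
        refine ⟨⟨fun _ => n, fun _ => le_rfl, fun _ _ _ => rfl, fun _ => 0⟩, ?_, ?_, ?_⟩
        · show ∑ x : Fin n → X, prodProb P1 x * (if (0 : Fin 3) = 1 then (1:ℝ) else 0) ≤ _
          have hz : ∀ x : Fin n → X,
              prodProb P1 x * (if (0 : Fin 3) = 1 then (1:ℝ) else 0) = 0 := by
            intro x; rw [if_neg (by decide), mul_zero]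
          rw [Finset.sum_eq_zero fun x _ => hz x]
          exact (Real.exp_pos _).le
        · show ∑ x : Fin n → X, prodProb P2 x * (if (0 : Fin 3) = 0 then (1:ℝ) else 0) ≤ _
          have hz : ∀ x : Fin n → X,
              prodProb P2 x * (if (0 : Fin 3) = 0 then (1:ℝ) else 0) = prodProb P2 x := by
            intro x; rw [if_pos rfl, mul_one]
          rw [Finset.sum_congr rfl fun x _ => hz x, sum_prodProb P2 h2.2 n]
          have hr : -(((0:ℝ) - δ) * n) = δ * n := by ring
          rw [hr]
          exact Real.one_le_exp (mul_nonneg hδ.le hn0)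
        · show (∑ x : Fin n → X, prodProb P1 x * (if (0 : Fin 3) = 2 then (1:ℝ) else 0)) +
            (∑ x : Fin n → X, prodProb P2 x * (if (0 : Fin 3) = 2 then (1:ℝ) else 0)) ≤ _
          have hz1 : ∀ (P : X → ℝ) (x : Fin n → X),
              prodProb P x * (if (0 : Fin 3) = 2 then (1:ℝ) else 0) = 0 := by
            intro P x; rw [if_neg (by decide), mul_zero]
          rw [Finset.sum_eq_zero fun x _ => hz1 P1 x, Finset.sum_eq_zero fun x _ => hz1 P2 x]
          norm_num
          exact (Real.exp_pos _).le


end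
end
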